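/- Let Σ ⊂ R^{2,1} be a surface invariant under the one-parameter group A^λ_s(x₁,x₂,x₃) = (x₁ + λs, cosh(s)x₂ + sinh(s)x₃, sinh(s)x₂ + cosh(s)x₃), and let φ_λ(x) = sup_{p∈Σ} ⟨p, ξ(x,0)⟩ where ξ(x,y) = (2x, -1+x²+y², 1+x²+y²). Then for every s, x ∈ R: φ_λ(e^s x) = e^s (φ_λ(x) + 2λ s x). -/

import Mathlib

noncomputable section
open Real Set

/-- The Minkowski bilinear form on `ℝ^{2,1}`. -/
def mink (u v : ℝ × ℝ × ℝ) : ℝ := u.1 * v.1 + u.2.1 * v.2.1 - u.2.2 * v.2.2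

/-- The glide-hyperbolic one-parameter group `A^λ_s`. -/
def Aglide (l s : ℝ) (p : ℝ × ℝ × ℝ) : ℝ × ℝ × ℝ :=
  (p.1 + l * s,
   Real.cosh s * p.2.1 + Real.sinh s * p.2.2,
   Real.sinh s * p.2.1 + Real.cosh s * p.2.2)

/-- The parametrization `ξ(x,y) = (2x, -1+x²+y², 1+x²+y²)` (point at infinity `π/2`). -/
def xiMap (x y : ℝ) : ℝ × ℝ × ℝ := (2 * x, -1 + x ^ 2 + y ^ 2, 1 + x ^ 2 + y ^ 2)

lemma aux_mul_strictMono {a : ℝ} (ha : 0 < a) :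
    StrictMono (fun u : EReal => u * (a : EReal)) := by
  have h1 : (fun u : EReal => u * (a : EReal)) = fun u : EReal => u / ((a⁻¹ : ℝ) : EReal) := by
    funext u
    show u * (a : EReal) = u * ((a⁻¹ : ℝ) : EReal)⁻¹
    rw [← EReal.coe_inv, inv_inv]
  rw [h1]
  exact EReal.strictMono_div_right_of_pos
    (by exact_mod_cast inv_pos.2 ha) (by simp)

/-- The order isomorphism `t ↦ a (t + c)` on `EReal`, for `a > 0` real and `c` real. -/
def glideIso (a c : ℝ) (ha : 0 < a) : EReal ≃o EReal where
  toFun t := (a : EReal) * (t + (c : EReal))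
  invFun t := t / (a : EReal) - (c : EReal)
  left_inv t := by
    have hdiv : ((a : EReal) * (t + (c : EReal))) / (a : EReal) = t + (c : EReal) := by
      rw [mul_comm]
      show ((t + (c : EReal)) * a) * (a : EReal)⁻¹ = t + (c : EReal)
      rw [mul_assoc]
      show (t + (c : EReal)) * ((a : EReal) / a) = t + (c : EReal)
      rw [EReal.div_self (by simp) (by simp) (by exact_mod_cast ha.ne'), mul_one]
    simp only [hdiv]
    exact EReal.add_sub_cancel_right
  right_inv t := by
    simp only
    rw [EReal.sub_add_cancel]
    exact EReal.mul_div_cancel (by simp) (by simp) (by exact_mod_cast ha.ne')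
  map_rel_iff' := by
    intro t t'
    have hsm : StrictMono (fun t : EReal => (a : EReal) * (t + (c : EReal))) := by
      intro u v h
      have h2 : u + (c : EReal) < v + (c : EReal) := EReal.add_lt_add_right_coe h c
      have h3 := aux_mul_strictMono ha h2
      simpa [mul_comm] using h3
    exact hsm.le_iff_le

lemma glideIso_apply (a c : ℝ) (ha : 0 < a) (t : EReal) :
    glideIso a c ha t = (a : EReal) * (t + (c : EReal)) := rfl

/-- The key algebraic identity for the glide motion. -/
lemma mink_glide (l s x : ℝ) (p : ℝ × ℝ × ℝ) :
    mink (Aglide l s p) (xiMap (Real.exp s * x) 0) =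
      Real.exp s * (mink p (xiMap x 0) + 2 * l * s * x) := by
  simp only [mink, Aglide, xiMap, Real.cosh_eq, Real.sinh_eq, Real.exp_neg]
  have h := Real.exp_ne_zero s
  field_simp
  ring

/-- If `Σ ⊂ ℝ^{2,1}` is invariant under the glide-hyperbolic group `A^λ`, then its
parabolic null support function `φ_λ(x) = sup_{p∈Σ}⟨p, ξ(x,0)⟩` satisfies the functional
equation `φ_λ(e^s x) = e^s (φ_λ(x) + 2λsx)` for all `s, x ∈ ℝ`. -/
theorem stmt15 (l : ℝ) (S : Set (ℝ × ℝ × ℝ)) (hinv : ∀ s : ℝ, Aglide l s '' S = S) :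
    ∀ s x : ℝ,
      (⨆ p ∈ S, ((mink p (xiMap (Real.exp s * x) 0) : ℝ) : EReal)) =
        ((Real.exp s : ℝ) : EReal) *
          ((⨆ p ∈ S, ((mink p (xiMap x 0) : ℝ) : EReal)) + ((2 * l * s * x : ℝ) : EReal)) := by
  intro s x
  have ha : (0 : ℝ) < Real.exp s := Real.exp_pos s
  set g := glideIso (Real.exp s) (2 * l * s * x) ha with hg
  calc
    (⨆ p ∈ S, ((mink p (xiMap (Real.exp s * x) 0) : ℝ) : EReal))
        = ⨆ p ∈ Aglide l s '' S, ((mink p (xiMap (Real.exp s * x) 0) : ℝ) : EReal) := by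
          rw [hinv s]
    _ = ⨆ p ∈ S, ((mink (Aglide l s p) (xiMap (Real.exp s * x) 0) : ℝ) : EReal) :=
          iSup_image
    _ = ⨆ p ∈ S, g ((mink p (xiMap x 0) : ℝ) : EReal) := by
          apply iSup_congr
          intro p
          apply iSup_congr
          intro _
          rw [mink_glide, glideIso_apply, ← EReal.coe_add, ← EReal.coe_mul]
    _ = g (⨆ p ∈ S, ((mink p (xiMap x 0) : ℝ) : EReal)) := by
          rw [g.map_iSup]
          exact iSup_congr fun p => (g.map_iSup _).symm
    _ = ((Real.exp s : ℝ) : EReal) *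
          ((⨆ p ∈ S, ((mink p (xiMap x 0) : ℝ) : EReal)) + ((2 * l * s * x : ℝ) : EReal)) :=
          rfl
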